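/- Let A be a nonnegative n×n matrix with an upper triangular block partition into irreducible diagonal blocks A_1,…,A_r, where for each i ∈ [s] at least one off-diagonal block A_{ij} (j > i) is nonzero and for each i ∈ {s+1,…,r} all off-diagonal blocks in row i are zero. Then A has a positive eigenvector (necessarily for the eigenvalue ρ(A)) if and only if ρ(A_i) < ρ(A) for all i ∈ [s] and ρ(A_i) = ρ(A) for all i ∈ {s+1,…,r}. -/

import Mathlib

open Finset

noncomputable section

/-- `(A x^{m-1})_i` for a tensor of order `m'+1` and dimension `n`. -/
def tApply {n m' : ℕ} (A : Fin n → (Fin m' → Fin n) → ℝ) (x : Fin n → ℝ) (i : Fin n) : ℝ :=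
  ∑ idx : Fin m' → Fin n, A i idx * ∏ k, x (idx k)

/-- Complex version of `tApply`. -/
def tApplyC {n m' : ℕ} (A : Fin n → (Fin m' → Fin n) → ℝ) (x : Fin n → ℂ) (i : Fin n) : ℂ :=
  ∑ idx : Fin m' → Fin n, (A i idx : ℂ) * ∏ k, x (idx k)

/-- `lam` is an eigenvalue of the tensor `A`. -/
def IsEig {n m' : ℕ} (A : Fin n → (Fin m' → Fin n) → ℝ) (lam : ℂ) : Prop :=
  ∃ x : Fin n → ℂ, x ≠ 0 ∧ ∀ i, tApplyC A x i = lam * x i ^ m'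

/-- The spectral radius of a tensor. -/
def specRad {n m' : ℕ} (A : Fin n → (Fin m' → Fin n) → ℝ) : ℝ :=
  sSup {r | ∃ lam, IsEig A lam ∧ r = ‖lam‖}

/-- The majorization matrix `M_A` of a tensor `A`. -/
def major {n m' : ℕ} (A : Fin n → (Fin m' → Fin n) → ℝ) (i j : Fin n) : ℝ :=
  ∑ idx ∈ univ.filter (fun idx : Fin m' → Fin n => ∃ k, idx k = j), A i idx

/-- The majorization matrix of the principal sub-tensor `A_I`. -/
def subMajor {n m' : ℕ} (A : Fin n → (Fin m' → Fin n) → ℝ) (I : Finset (Fin n))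
    (i j : Fin n) : ℝ :=
  ∑ idx ∈ univ.filter (fun idx : Fin m' → Fin n => (∃ k, idx k = j) ∧ ∀ k, idx k ∈ I),
    A i idx

/-- Irreducibility of (the principal submatrix on `I` of) a nonnegative matrix. -/
def MatIrredOn {n : ℕ} (M : Fin n → Fin n → ℝ) (I : Finset (Fin n)) : Prop :=
  ∀ S ⊆ I, S.Nonempty → S ≠ I → ∃ i ∈ S, ∃ j ∈ I \ S, M i j ≠ 0

/-- A tensor is weakly irreducible if its majorization matrix is irreducible. -/
def WeaklyIrred {n m' : ℕ} (A : Fin n → (Fin m' → Fin n) → ℝ) : Prop :=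
  MatIrredOn (major A) Finset.univ

/-- Weak irreducibility of the principal sub-tensor `A_I`. -/
def WeaklyIrredOn {n m' : ℕ} (A : Fin n → (Fin m' → Fin n) → ℝ) (I : Finset (Fin n)) : Prop :=
  MatIrredOn (subMajor A I) I

/-- `(A_I e_I^{m-1})_i`, the action of the principal sub-tensor on the all-ones vector. -/
def subApplyOnes {n m' : ℕ} (A : Fin n → (Fin m' → Fin n) → ℝ) (I : Finset (Fin n))
    (i : Fin n) : ℝ :=
  ∑ idx ∈ univ.filter (fun idx : Fin m' → Fin n => ∀ k, idx k ∈ I), A i idx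

/-- The spectral radius of the principal sub-tensor `A_I`. -/
def subSpecRad {n m' : ℕ} (A : Fin n → (Fin m' → Fin n) → ℝ) (I : Finset (Fin n)) : ℝ :=
  sSup {r | ∃ lam : ℂ, ∃ x : Fin n → ℂ, (∃ i ∈ I, x i ≠ 0) ∧
    (∀ i ∈ I, (∑ idx ∈ univ.filter (fun idx : Fin m' → Fin n => ∀ k, idx k ∈ I),
      (A i idx : ℂ) * ∏ k, x (idx k)) = lam * x i ^ m') ∧ r = ‖lam‖}

/-- The spectral radius of the principal submatrix of `M` on the index set `I`. -/
def matSpecRadOn {n : ℕ} (M : Matrix (Fin n) (Fin n) ℝ) (I : Finset (Fin n)) : ℝ :=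
  sSup {r | ∃ mu : ℂ, ∃ v : Fin n → ℂ, (∃ i ∈ I, v i ≠ 0) ∧
    (∀ i ∈ I, (∑ j ∈ I, (M i j : ℂ) * v j) = mu * v i) ∧ r = ‖mu‖}

open Matrix in
section
namespace PFCore

variable {ι : Type*} [Fintype ι] [DecidableEq ι]

/-- Irreducibility of a matrix over an arbitrary finite index type. -/
def Irr (N : Matrix ι ι ℝ) : Prop :=
  ∀ S : Finset ι, S.Nonempty → S ≠ univ → ∃ i ∈ S, ∃ j ∉ S, N i j ≠ 0

lemma mulVec_apply (N : Matrix ι ι ℝ) (v : ι → ℝ) (i : ι) :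
    N.mulVec v i = ∑ j, N i j * v j := by
  simp [Matrix.mulVec, dotProduct]

lemma mulVec_nonneg {N : Matrix ι ι ℝ} (hN : ∀ i j, 0 ≤ N i j) {v : ι → ℝ}
    (hv : ∀ i, 0 ≤ v i) (i : ι) : 0 ≤ N.mulVec v i := by
  rw [mulVec_apply]
  exact Finset.sum_nonneg fun j _ => mul_nonneg (hN i j) (hv j)

lemma mulVec_mono {N : Matrix ι ι ℝ} (hN : ∀ i j, 0 ≤ N i j) {u v : ι → ℝ}
    (huv : ∀ j, u j ≤ v j) (i : ι) : N.mulVec u i ≤ N.mulVec v i := by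
  rw [mulVec_apply, mulVec_apply]
  exact Finset.sum_le_sum fun j _ => mul_le_mul_of_nonneg_left (huv j) (hN i j)

lemma onePlus_nonneg {N : Matrix ι ι ℝ} (hN : ∀ i j, 0 ≤ N i j) (i j : ι) :
    0 ≤ (1 + N) i j := by
  have : (1 : Matrix ι ι ℝ) i j = if i = j then 1 else 0 := by
    simp [Matrix.one_apply]
  simp only [Matrix.add_apply, this]
  split <;> [linarith [hN i j]; linarith [hN i j]]

lemma pow_entry_nonneg {N : Matrix ι ι ℝ} (hN : ∀ i j, 0 ≤ N i j) :
    ∀ (k : ℕ) (i j : ι), 0 ≤ ((1 + N) ^ k) i j := by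
  intro k
  induction k with
  | zero => intro i j; simp [Matrix.one_apply]; split <;> norm_num
  | succ k ih =>
    intro i j
    rw [pow_succ, Matrix.mul_apply]
    exact Finset.sum_nonneg fun l _ => mul_nonneg (ih i l) (onePlus_nonneg hN l j)

lemma pow_entry_mono {N : Matrix ι ι ℝ} (hN : ∀ i j, 0 ≤ N i j) (k : ℕ) (i j : ι) :
    ((1 + N) ^ k) i j ≤ ((1 + N) ^ (k + 1)) i j := by
  rw [pow_succ, Matrix.mul_apply]
  have h1 : ((1 + N) ^ k) i j * (1 + N) j j ≤ ∑ l, ((1 + N) ^ k) i l * (1 + N) l j :=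
    Finset.single_le_sum (f := fun l => ((1 + N) ^ k) i l * (1 + N) l j)
      (fun l _ => mul_nonneg (pow_entry_nonneg hN k i l) (onePlus_nonneg hN l j))
      (mem_univ j)
  have h2 : (1 : ℝ) ≤ (1 + N) j j := by
    have : (1 : Matrix ι ι ℝ) j j = 1 := Matrix.one_apply_eq j
    simp only [Matrix.add_apply, this]
    linarith [hN j j]
  calc ((1 + N) ^ k) i j = ((1 + N) ^ k) i j * 1 := by ring
    _ ≤ ((1 + N) ^ k) i j * (1 + N) j j :=
        mul_le_mul_of_nonneg_left h2 (pow_entry_nonneg hN k i j)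
    _ ≤ _ := h1

lemma pow_entry_mono' {N : Matrix ι ι ℝ} (hN : ∀ i j, 0 ≤ N i j) {k l : ℕ} (hkl : k ≤ l)
    (i j : ι) : ((1 + N) ^ k) i j ≤ ((1 + N) ^ l) i j := by
  induction l with
  | zero => simp_all
  | succ l ih =>
    rcases Nat.lt_or_ge k (l+1) with h | h
    · exact le_trans (ih (Nat.lt_succ_iff.mp h)) (pow_entry_mono hN l i j)
    · have : k = l + 1 := le_antisymm hkl h
      subst this; exact le_refl _

lemma pow_diag_pos {N : Matrix ι ι ℝ} (hN : ∀ i j, 0 ≤ N i j) (k : ℕ) (i : ι) :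
    0 < ((1 + N) ^ k) i i := by
  have h0 : (0:ℝ) < ((1 + N : Matrix ι ι ℝ) ^ 0) i i := by
    rw [pow_zero]; simp [Matrix.one_apply]
  exact lt_of_lt_of_le h0 (pow_entry_mono' hN (Nat.zero_le k) i i)

/-- The support of row i of (1+N)^k grows. -/
lemma support_card {N : Matrix ι ι ℝ} (hN : ∀ i j, 0 ≤ N i j) (hirr : Irr N) (i : ι) :
    ∀ k : ℕ, min (Fintype.card ι) (k + 1) ≤
      (univ.filter fun j => 0 < ((1 + N) ^ k) i j).card := by
  intro k
  induction k with
  | zero =>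
    have hmem : i ∈ univ.filter fun j => 0 < (((1 + N : Matrix ι ι ℝ)) ^ 0) i j := by
      simp [Matrix.one_apply]
    have h1 : 1 ≤ (univ.filter fun j => 0 < (((1 + N : Matrix ι ι ℝ)) ^ 0) i j).card :=
      Finset.card_pos.mpr ⟨i, hmem⟩
    exact le_trans (min_le_right _ _) h1
  | succ k ih =>
    set S := univ.filter fun j => 0 < ((1 + N) ^ k) i j with hS
    set T := univ.filter fun j => 0 < ((1 + N) ^ (k+1)) i j with hT
    have hST : S ⊆ T := fun j hj => by
      simp only [hS, hT, mem_filter, mem_univ, true_and] at *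
      exact lt_of_lt_of_le hj (pow_entry_mono hN k i j)
    by_cases hu : S = univ
    · have : T = univ := univ_subset_iff.mp (hu ▸ hST)
      rw [this]
      simpa using min_le_left (Fintype.card ι) (k+2)
    · have hSne : S.Nonempty := ⟨i, by simp [hS, pow_diag_pos hN k i]⟩
      obtain ⟨p, hp, q, hq, hpq⟩ := hirr S hSne hu
      have hq' : q ∈ T := by
        simp only [hT, mem_filter, mem_univ, true_and]
        rw [pow_succ, Matrix.mul_apply]
        have hterm : 0 < ((1 + N) ^ k) i p * (1 + N) p q := by
          have h1 : 0 < ((1 + N) ^ k) i p := by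
            simpa [hS] using hp
          have h2 : 0 < (1 + N) p q := by
            have hone : (1 : Matrix ι ι ℝ) p q = if p = q then 1 else 0 := by
              simp [Matrix.one_apply]
            have hNpq : 0 < N p q := lt_of_le_of_ne (hN p q) (Ne.symm hpq)
            simp only [Matrix.add_apply, hone]
            split <;> linarith
          exact mul_pos h1 h2
        calc (0:ℝ) < ((1 + N) ^ k) i p * (1 + N) p q := hterm
          _ ≤ _ := Finset.single_le_sum (f := fun l => ((1 + N) ^ k) i l * (1 + N) l q)
              (fun l _ => mul_nonneg (pow_entry_nonneg hN k i l) (onePlus_nonneg hN l q))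
              (mem_univ p)
      have hqS : q ∉ S := hq
      have hcard : S.card + 1 ≤ T.card := by
        have : insert q S ⊆ T := insert_subset hq' hST
        calc S.card + 1 = (insert q S).card := (Finset.card_insert_of_notMem hqS).symm
          _ ≤ T.card := Finset.card_le_card this
      calc min (Fintype.card ι) (k + 2) ≤ min (Fintype.card ι) (k + 1) + 1 := by
            rcases le_total (Fintype.card ι) (k+1) with h | h
            · rw [min_eq_left h, min_eq_left (h.trans (Nat.le_succ _))]; omega
            · rw [min_eq_right h]; exact le_trans (min_le_right _ _) (by omega)
        _ ≤ S.card + 1 := Nat.add_le_add_right ih 1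
        _ ≤ T.card := hcard

lemma pow_pos_all {N : Matrix ι ι ℝ} (hN : ∀ i j, 0 ≤ N i j) (hirr : Irr N) (i j : ι) :
    0 < ((1 + N) ^ (Fintype.card ι - 1)) i j := by
  have hcard : 0 < Fintype.card ι := Fintype.card_pos_iff.mpr ⟨i⟩
  have h := support_card hN hirr i (Fintype.card ι - 1)
  have hmin : min (Fintype.card ι) (Fintype.card ι - 1 + 1) = Fintype.card ι := by omega
  rw [hmin] at h
  have hfull : (univ.filter fun j => 0 < ((1 + N) ^ (Fintype.card ι - 1)) i j) = univ := by
    apply Finset.eq_univ_of_card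
    exact le_antisymm (Finset.card_le_card (Finset.filter_subset _ _) |>.trans (by simp)) h |>.symm ▸ rfl
  have : j ∈ univ.filter fun j => 0 < ((1 + N) ^ (Fintype.card ι - 1)) i j := by
    rw [hfull]; exact mem_univ j
  simpa using this

lemma bound_lemma {N : Matrix ι ι ℝ} (hN : ∀ i j, 0 ≤ N i j) {lam : ℝ} {x : ι → ℝ}
    (hx : x ∈ stdSimplex ℝ ι) (hle : ∀ i, lam * x i ≤ N.mulVec x i) :
    lam ≤ ∑ i, ∑ j, N i j := by
  obtain ⟨hx0, hx1⟩ := hx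
  have hxle : ∀ j, x j ≤ 1 := by
    intro j
    rw [← hx1]
    exact Finset.single_le_sum (fun i _ => hx0 i) (mem_univ j)
  calc lam = ∑ i, lam * x i := by rw [← Finset.mul_sum, hx1, mul_one]
    _ ≤ ∑ i, N.mulVec x i := Finset.sum_le_sum fun i _ => hle i
    _ = ∑ i, ∑ j, N i j * x j := by simp [mulVec_apply]
    _ ≤ ∑ i, ∑ j, N i j := Finset.sum_le_sum fun i _ => Finset.sum_le_sum fun j _ =>
        (mul_le_of_le_one_right (hN i j) (hxle j))

lemma pow_mulVec_eig {N : Matrix ι ι ℝ} {lam : ℝ} {x : ι → ℝ}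
    (heig : N.mulVec x = lam • x) (k : ℕ) :
    ((1 + N) ^ k).mulVec x = ((1 + lam) ^ k) • x := by
  induction k with
  | zero => simp
  | succ k ih =>
    rw [pow_succ']
    rw [← Matrix.mulVec_mulVec, ih]
    have h1 : (1 + N).mulVec x = (1 + lam) • x := by
      rw [Matrix.add_mulVec, Matrix.one_mulVec, heig]
      funext i; simp [Pi.smul_apply]; ring
    rw [Matrix.mulVec_smul, h1]
    funext i; simp [Pi.smul_apply]; ring

/-- Perron–Frobenius existence: an irreducible nonnegative matrix has a positive
eigenvector with nonnegative eigenvalue. -/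
theorem perron [Nonempty ι] {N : Matrix ι ι ℝ} (hN : ∀ i j, 0 ≤ N i j) (hirr : Irr N) :
    ∃ lam : ℝ, 0 ≤ lam ∧ ∃ y : ι → ℝ, (∀ i, 0 < y i) ∧ N.mulVec y = lam • y := by
  classical
  set B : ℝ := ∑ i, ∑ j, N i j with hB
  set T : Set (ℝ × (ι → ℝ)) :=
    {p | p.1 ∈ Set.Icc (0:ℝ) B ∧ p.2 ∈ stdSimplex ℝ ι ∧ ∀ i, p.1 * p.2 i ≤ N.mulVec p.2 i}
    with hT
  have hBnonneg : 0 ≤ B := Finset.sum_nonneg fun i _ => Finset.sum_nonneg fun j _ => hN i j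
  -- T is nonempty
  have hTne : T.Nonempty := by
    refine ⟨(0, fun _ => (Fintype.card ι : ℝ)⁻¹), ?_, ?_, ?_⟩
    · exact ⟨le_refl 0, hBnonneg⟩
    · constructor
      · intro i; positivity
      · rw [Finset.sum_const, nsmul_eq_mul]
        rw [Finset.card_univ]
        rw [mul_inv_cancel₀]
        exact_mod_cast Fintype.card_ne_zero
    · intro i
      simp only [zero_mul]
      exact mulVec_nonneg hN (fun _ => by positivity) i
  -- T is compact
  have hTcl : IsClosed T := by
    apply IsClosed.inter
    · exact isClosed_Icc.preimage continuous_fst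
    apply IsClosed.inter
    · exact (isClosed_stdSimplex ℝ ι).preimage continuous_snd
    · have : ∀ i : ι, IsClosed {p : ℝ × (ι → ℝ) | p.1 * p.2 i ≤ N.mulVec p.2 i} := by
        intro i
        apply isClosed_le
        · exact continuous_fst.mul ((continuous_apply i).comp continuous_snd)
        · have : (fun p : ℝ × (ι → ℝ) => N.mulVec p.2 i) =
              fun p => ∑ j, N i j * p.2 j := by
            funext p; rw [mulVec_apply]
          rw [this]
          exact continuous_finset_sum _ fun j _ =>
            continuous_const.mul ((continuous_apply j).comp continuous_snd)
      have heq : {p : ℝ × (ι → ℝ) | ∀ i, p.1 * p.2 i ≤ N.mulVec p.2 i} =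
          ⋂ i, {p | p.1 * p.2 i ≤ N.mulVec p.2 i} := by
        ext p; simp
      show IsClosed {p : ℝ × (ι → ℝ) | ∀ i, p.1 * p.2 i ≤ N.mulVec p.2 i}
      rw [heq]
      exact isClosed_iInter fun i => by apply_assumption
  have hTcomp : IsCompact T := by
    have hsub : T ⊆ (Set.Icc (0:ℝ) B) ×ˢ stdSimplex ℝ ι := by
      intro p hp; exact ⟨hp.1, hp.2.1⟩
    exact (isCompact_Icc.prod (isCompact_stdSimplex ℝ ι)).of_isClosed_subset hTcl hsub
  obtain ⟨⟨lam, x⟩, hmem, hmax⟩ := hTcomp.exists_isMaxOn hTne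
    (continuous_fst.continuousOn)
  obtain ⟨hlamIcc, hxsimplex, hsub⟩ := hmem
  set P : Matrix ι ι ℝ := (1 + N) ^ (Fintype.card ι - 1) with hP
  have hPpos : ∀ i j, 0 < P i j := fun i j => pow_pos_all hN hirr i j
  have hPN : P * N = N * P := by
    have h1 : Commute (1 + N) N := ((Commute.one_left N).add_left (Commute.refl N))
    exact (h1.pow_left _).eq
  -- x nonneg and nonzero
  have hx0 : ∀ i, 0 ≤ x i := hxsimplex.1
  have hxs : ∑ i, x i = 1 := hxsimplex.2
  have hxnz : ∃ i0, 0 < x i0 := by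
    by_contra h
    push_neg at h
    have : ∀ i, x i = 0 := fun i => le_antisymm (h i) (hx0 i)
    simp [this] at hxs
  -- P.mulVec of a nonneg nonzero vector is positive
  have hPpositive : ∀ (z : ι → ℝ), (∀ i, 0 ≤ z i) → (∃ i0, 0 < z i0) →
      ∀ i, 0 < P.mulVec z i := by
    intro z hz ⟨i0, hi0⟩ i
    rw [mulVec_apply]
    have : 0 < P i i0 * z i0 := mul_pos (hPpos i i0) hi0
    calc (0:ℝ) < P i i0 * z i0 := this
      _ ≤ ∑ j, P i j * z j := Finset.single_le_sum
          (fun j _ => mul_nonneg (le_of_lt (hPpos i j)) (hz j)) (mem_univ i0)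
  -- N x = lam x
  have heig : N.mulVec x = lam • x := by
    by_contra hne
    set z : ι → ℝ := fun i => N.mulVec x i - lam * x i with hz
    have hz0 : ∀ i, 0 ≤ z i := fun i => by simp [hz]; linarith [hsub i]
    have hznz : ∃ i0, 0 < z i0 := by
      by_contra h
      push_neg at h
      apply hne
      funext i
      have := le_antisymm (h i) (hz0 i)
      simp [hz] at this
      simp [Pi.smul_apply, smul_eq_mul]
      linarith
    set y : ι → ℝ := P.mulVec x with hy
    have hypos : ∀ i, 0 < y i := hPpositive x hx0 hxnz
    set w : ι → ℝ := P.mulVec z with hw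
    have hwpos : ∀ i, 0 < w i := hPpositive z hz0 hznz
    have hkey : ∀ i, N.mulVec y i - lam * y i = w i := by
      intro i
      have h1 : N.mulVec y = P.mulVec (N.mulVec x) := by
        rw [hy, Matrix.mulVec_mulVec, Matrix.mulVec_mulVec, hPN]
      have h2 : P.mulVec (fun j => N.mulVec x j - lam * x j) i
          = P.mulVec (N.mulVec x) i - lam * P.mulVec x i := by
        simp only [mulVec_apply]
        rw [Finset.mul_sum, ← Finset.sum_sub_distrib]
        congr 1; funext j; ring
      rw [h1, hw, hz, h2, hy]
    -- pick epsilon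
    obtain ⟨i1, _, hi1⟩ := Finset.exists_min_image univ (fun i => w i / y i) univ_nonempty
    set eps : ℝ := w i1 / y i1 with heps
    have hepspos : 0 < eps := div_pos (hwpos i1) (hypos i1)
    have hepsle : ∀ i, eps * y i ≤ w i := by
      intro i
      have := hi1 i (mem_univ i)
      rw [heps]
      calc w i1 / y i1 * y i ≤ w i / y i * y i :=
        mul_le_mul_of_nonneg_right this (le_of_lt (hypos i))
        _ = w i := div_mul_cancel₀ _ (ne_of_gt (hypos i))
    -- normalized vector
    set sy : ℝ := ∑ i, y i with hsy
    have hsypos : 0 < sy := Finset.sum_pos (fun i _ => hypos i) univ_nonempty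
    set y' : ι → ℝ := fun i => y i / sy with hy'
    have hy'simplex : y' ∈ stdSimplex ℝ ι := by
      constructor
      · intro i; exact le_of_lt (div_pos (hypos i) hsypos)
      · rw [hy']; simp only
        rw [← Finset.sum_div, ← hsy, div_self (ne_of_gt hsypos)]
    have hsub' : ∀ i, (lam + eps) * y' i ≤ N.mulVec y' i := by
      intro i
      have hNy' : N.mulVec y' i = N.mulVec y i / sy := by
        simp only [hy', mulVec_apply, Finset.sum_div]
        exact Finset.sum_congr rfl fun j _ => by ring
      rw [hNy', hy']
      have h3 : (lam + eps) * y i ≤ N.mulVec y i := by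
        have h4 := hepsle i
        have h5 := hkey i
        nlinarith
      calc (lam + eps) * (y i / sy) = ((lam + eps) * y i) / sy := by ring
        _ ≤ N.mulVec y i / sy := by gcongr
    have hband : lam + eps ≤ B := bound_lemma hN hy'simplex hsub'
    have hmemT : ((lam + eps), y') ∈ T := by
      refine ⟨⟨?_, hband⟩, hy'simplex, hsub'⟩
      have h0lam : (0:ℝ) ≤ lam := hlamIcc.1
      show (0:ℝ) ≤ lam + eps
      linarith
    have hcontra : lam + eps ≤ lam := hmax hmemT
    linarith
  -- positivity of x
  have hPx : P.mulVec x = ((1 + lam) ^ (Fintype.card ι - 1)) • x := pow_mulVec_eig heig _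
  have hlam0 : 0 ≤ lam := hlamIcc.1
  have hc : 0 < (1 + lam) ^ (Fintype.card ι - 1) := by positivity
  have hxpos : ∀ i, 0 < x i := by
    intro i
    have h1 : 0 < P.mulVec x i := hPpositive x hx0 hxnz i
    rw [hPx] at h1
    simp only [Pi.smul_apply, smul_eq_mul] at h1
    nlinarith
  exact ⟨lam, hlam0, x, hxpos, heig⟩

lemma irr_transpose {N : Matrix ι ι ℝ} (hirr : Irr N) : Irr Nᵀ := by
  intro S hSne hSuniv
  have hcompl_ne : (univ \ S).Nonempty := by
    have h : ∃ j, j ∉ S := by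
      by_contra h
      push_neg at h
      exact hSuniv (Finset.eq_univ_iff_forall.mpr h)
    obtain ⟨j, hj⟩ := h
    exact ⟨j, by simp [hj]⟩
  have hcompl_nuniv : univ \ S ≠ univ := by
    intro h
    obtain ⟨i, hi⟩ := hSne
    have hmem : i ∈ univ \ S := by rw [h]; exact mem_univ i
    simp [hi] at hmem
  obtain ⟨i, hi, j, hj, hij⟩ := hirr (univ \ S) hcompl_ne hcompl_nuniv
  have hjS : j ∈ S := by
    by_contra h
    exact hj (by simp [h])
  have hiS : i ∉ S := by
    simp only [mem_sdiff, mem_univ, true_and] at hi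
    exact hi
  exact ⟨j, hjS, i, hiS, by simpa [Matrix.transpose_apply] using hij⟩

/-- μ ≥ 0 when there is a positive eigenvector. -/
lemma eig_nonneg [Nonempty ι] {N : Matrix ι ι ℝ} (hN : ∀ i j, 0 ≤ N i j) {mu : ℝ}
    {y : ι → ℝ} (hy : ∀ i, 0 < y i) (heig : N.mulVec y = mu • y) : 0 ≤ mu := by
  obtain ⟨i⟩ := ‹Nonempty ι›
  have h1 : 0 ≤ N.mulVec y i := mulVec_nonneg hN (fun j => le_of_lt (hy j)) i
  rw [heig] at h1
  simp only [Pi.smul_apply, smul_eq_mul] at h1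
  nlinarith [hy i]

/-- Domination: if N has a positive eigenvector with eigenvalue μ, then any complex
eigenvalue ν of N satisfies |ν| ≤ μ. -/
lemma dominate [Nonempty ι] {N : Matrix ι ι ℝ} (hN : ∀ i j, 0 ≤ N i j) {mu : ℝ}
    {y : ι → ℝ} (hy : ∀ i, 0 < y i) (heig : N.mulVec y = mu • y)
    {nu : ℂ} {v : ι → ℂ} (hvne : v ≠ 0)
    (hv : ∀ i, (∑ j, (N i j : ℂ) * v j) = nu * v i) : ‖nu‖ ≤ mu := by
  obtain ⟨i0, _, hi0⟩ := Finset.exists_max_image univ (fun i => ‖v i‖ / y i)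
    univ_nonempty
  set t : ℝ := ‖v i0‖ / y i0 with ht
  have htpos : 0 < t := by
    obtain ⟨i1, hi1⟩ := Function.ne_iff.mp hvne
    have h1 : 0 < ‖v i1‖ / y i1 :=
      div_pos (by simpa using hi1) (hy i1)
    exact lt_of_lt_of_le h1 (hi0 i1 (mem_univ i1))
  have hbound : ∀ j, ‖v j‖ ≤ t * y j := by
    intro j
    have h1 := hi0 j (mem_univ j)
    calc ‖v j‖ = ‖v j‖ / y j * y j :=
          (div_mul_cancel₀ _ (ne_of_gt (hy j))).symm
      _ ≤ t * y j := mul_le_mul_of_nonneg_right h1 (le_of_lt (hy j))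
  have habs : ‖nu‖ * ‖v i0‖ ≤ mu * ‖v i0‖ := by
    have h1 : ‖nu * v i0‖ = ‖nu‖ * ‖v i0‖ := norm_mul _ _
    have h2 : ‖∑ j, (N i0 j : ℂ) * v j‖ ≤ ∑ j, N i0 j * ‖v j‖ := by
      refine le_trans (norm_sum_le _ _) ?_
      refine Finset.sum_le_sum fun j _ => ?_
      rw [norm_mul, Complex.norm_real, Real.norm_eq_abs, abs_of_nonneg (hN i0 j)]
    have h3 : ∑ j, N i0 j * ‖v j‖ ≤ t * (mu * y i0) := by
      calc ∑ j, N i0 j * ‖v j‖ ≤ ∑ j, N i0 j * (t * y j) :=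
            Finset.sum_le_sum fun j _ => mul_le_mul_of_nonneg_left (hbound j) (hN i0 j)
        _ = t * N.mulVec y i0 := by rw [mulVec_apply, Finset.mul_sum]; exact Finset.sum_congr rfl fun j _ => by ring
        _ = t * (mu * y i0) := by rw [heig]; simp [Pi.smul_apply, smul_eq_mul]
    have h4 : ‖v i0‖ = t * y i0 := by
      rw [ht, div_mul_cancel₀ _ (ne_of_gt (hy i0))]
    calc ‖nu‖ * ‖v i0‖ = ‖nu * v i0‖ := h1.symm
      _ = ‖∑ j, (N i0 j : ℂ) * v j‖ := by rw [hv i0]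
      _ ≤ ∑ j, N i0 j * ‖v j‖ := h2
      _ ≤ t * (mu * y i0) := h3
      _ = mu * (t * y i0) := by ring
      _ = mu * ‖v i0‖ := by rw [h4]
  have hvi0 : 0 < ‖v i0‖ := by
    have : ‖v i0‖ = t * y i0 := by
      rw [ht, div_mul_cancel₀ _ (ne_of_gt (hy i0))]
    rw [this]
    exact mul_pos htpos (hy i0)
  exact le_of_mul_le_mul_right habs hvi0

/-- Pairing: the Perron values of N and Nᵀ coincide. -/
lemma pairing [Nonempty ι] {N : Matrix ι ι ℝ} {lam lamT : ℝ} {y z : ι → ℝ}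
    (hy : ∀ i, 0 < y i) (hz : ∀ i, 0 < z i)
    (heig : N.mulVec y = lam • y) (heigT : Nᵀ.mulVec z = lamT • z) : lam = lamT := by
  have h1 : ∑ i, z i * N.mulVec y i = lam * ∑ i, z i * y i := by
    rw [heig, Finset.mul_sum]
    exact Finset.sum_congr rfl fun i _ => by simp [Pi.smul_apply, smul_eq_mul]; ring
  have h2 : ∑ i, z i * N.mulVec y i = lamT * ∑ i, z i * y i := by
    have hswap : ∑ i, z i * N.mulVec y i = ∑ j, Nᵀ.mulVec z j * y j := by
      simp only [mulVec_apply, Finset.mul_sum, Finset.sum_mul]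
      rw [Finset.sum_comm]
      exact Finset.sum_congr rfl fun j _ => Finset.sum_congr rfl fun i _ => by
        simp [Matrix.transpose_apply]; ring
    rw [hswap]
    rw [heigT, Finset.mul_sum]
    exact Finset.sum_congr rfl fun i _ => by simp [Pi.smul_apply, smul_eq_mul]; ring
  have hzy : 0 < ∑ i, z i * y i :=
    Finset.sum_pos (fun i _ => mul_pos (hz i) (hy i)) univ_nonempty
  have h3 : lam * ∑ i, z i * y i = lamT * ∑ i, z i * y i := h1.symm.trans h2
  exact mul_right_cancel₀ (ne_of_gt hzy) h3

/-- Strict subinvariance: if x > 0, Nx ≤ mu x with strict inequality somewhere, then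
the Perron value lam of N satisfies lam < mu. -/
lemma strict_sub [Nonempty ι] {N : Matrix ι ι ℝ} (hN : ∀ i j, 0 ≤ N i j) (hirr : Irr N)
    {lam : ℝ} {y : ι → ℝ} (hy : ∀ i, 0 < y i) (heig : N.mulVec y = lam • y)
    {mu : ℝ} {x : ι → ℝ} (hx : ∀ i, 0 < x i)
    (hsub : ∀ i, N.mulVec x i ≤ mu * x i) (i0 : ι) (hstrict : N.mulVec x i0 < mu * x i0) :
    lam < mu := by
  obtain ⟨lamT, _, z, hz, heigT⟩ := perron (N := Nᵀ)
    (fun i j => hN j i) (irr_transpose hirr)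
  have hpair : lam = lamT := pairing hy hz heig heigT
  have h1 : ∑ i, z i * N.mulVec x i = lamT * ∑ i, z i * x i := by
    have hswap : ∑ i, z i * N.mulVec x i = ∑ j, Nᵀ.mulVec z j * x j := by
      simp only [mulVec_apply, Finset.mul_sum, Finset.sum_mul]
      rw [Finset.sum_comm]
      exact Finset.sum_congr rfl fun j _ => Finset.sum_congr rfl fun i _ => by
        simp [Matrix.transpose_apply]; ring
    rw [hswap, heigT, Finset.mul_sum]
    exact Finset.sum_congr rfl fun i _ => by simp [Pi.smul_apply, smul_eq_mul]; ring
  have h2 : ∑ i, z i * N.mulVec x i < mu * ∑ i, z i * x i := by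
    rw [Finset.mul_sum]
    apply Finset.sum_lt_sum
    · intro i _
      exact le_trans (mul_le_mul_of_nonneg_left (hsub i) (le_of_lt (hz i))) (le_of_eq (by ring))
    · exact ⟨i0, mem_univ i0, by nlinarith [hz i0, hstrict]⟩
  have hzx : 0 < ∑ i, z i * x i :=
    Finset.sum_pos (fun i _ => mul_pos (hz i) (hx i)) univ_nonempty
  rw [hpair]
  nlinarith [h1, h2, hzx]

lemma mulVec_pow_bound {N : Matrix ι ι ℝ} (hN : ∀ i j, 0 ≤ N i j)
    {lam : ℝ} {y : ι → ℝ} (heig : N.mulVec y = lam • y) (hynn : ∀ i, 0 ≤ y i)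
    {c : ι → ℝ} {t : ℝ} (hct : ∀ i, c i ≤ t * y i) (hc : ∀ i, 0 ≤ c i) (hlam : 0 ≤ lam)
    (ht : 0 ≤ t) :
    ∀ (k : ℕ) (i : ι), (N ^ k).mulVec c i ≤ t * lam ^ k * y i := by
  intro k
  induction k with
  | zero => intro i; simpa using hct i
  | succ k ih =>
    intro i
    have h1 : (N ^ (k+1)).mulVec c = N.mulVec ((N ^ k).mulVec c) := by
      rw [Matrix.mulVec_mulVec, ← pow_succ']
    rw [h1]
    calc N.mulVec ((N ^ k).mulVec c) i ≤ N.mulVec (fun j => t * lam ^ k * y j) i :=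
          mulVec_mono hN (fun j => ih j) i
      _ = t * lam ^ k * N.mulVec y i := by
          rw [mulVec_apply, mulVec_apply, Finset.mul_sum]
          exact Finset.sum_congr rfl fun j _ => by ring
      _ = t * lam ^ (k+1) * y i := by
          rw [heig]; simp only [Pi.smul_apply, smul_eq_mul]; ring
      _ ≤ t * lam ^ (k+1) * y i := le_refl _

lemma pow_mulVec_nonneg {N : Matrix ι ι ℝ} (hN : ∀ i j, 0 ≤ N i j)
    {c : ι → ℝ} (hc : ∀ i, 0 ≤ c i) (k : ℕ) (i : ι) : 0 ≤ (N ^ k).mulVec c i := by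
  induction k generalizing i with
  | zero => simpa using hc i
  | succ k ih =>
    have h1 : (N ^ (k+1)).mulVec c = N.mulVec ((N ^ k).mulVec c) := by
      rw [Matrix.mulVec_mulVec, ← pow_succ']
    rw [h1]
    exact mulVec_nonneg hN ih i

/-- Neumann series: solve (rho - N) x = c with x > 0. -/
lemma neumann [Nonempty ι] {N : Matrix ι ι ℝ} (hN : ∀ i j, 0 ≤ N i j) (hirr : Irr N)
    {lam : ℝ} (hlam : 0 ≤ lam) {y : ι → ℝ} (hy : ∀ i, 0 < y i)
    (heig : N.mulVec y = lam • y) {rho : ℝ} (hrho : lam < rho)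
    {c : ι → ℝ} (hc : ∀ i, 0 ≤ c i) (hcne : ∃ i, 0 < c i) :
    ∃ x : ι → ℝ, (∀ i, 0 < x i) ∧ ∀ i, rho * x i = N.mulVec x i + c i := by
  have hrho0 : 0 < rho := lt_of_le_of_lt hlam hrho
  -- choose t with c ≤ t y
  obtain ⟨j0, _, hj0⟩ := Finset.exists_max_image univ (fun i => c i / y i) univ_nonempty
  set t : ℝ := c j0 / y j0 with htdef
  have ht0 : 0 ≤ t := div_nonneg (hc j0) (le_of_lt (hy j0))
  have hct : ∀ i, c i ≤ t * y i := by
    intro i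
    calc c i = c i / y i * y i := (div_mul_cancel₀ _ (ne_of_gt (hy i))).symm
      _ ≤ t * y i := mul_le_mul_of_nonneg_right (hj0 i (mem_univ i)) (le_of_lt (hy i))
  set f : ℕ → ι → ℝ := fun k i => (N ^ k).mulVec c i / rho ^ (k+1) with hf
  have hfnn : ∀ k i, 0 ≤ f k i := fun k i =>
    div_nonneg (pow_mulVec_nonneg hN hc k i) (le_of_lt (pow_pos hrho0 _))
  have hfle : ∀ i k, f k i ≤ (t * y i / rho) * (lam / rho) ^ k := by
    intro i k
    have h1 := mulVec_pow_bound hN heig (fun i => le_of_lt (hy i)) hct hc hlam ht0 k i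
    rw [hf]
    simp only
    rw [div_le_iff₀ (pow_pos hrho0 _)]
    calc (N ^ k).mulVec c i ≤ t * lam ^ k * y i := h1
      _ = t * y i / rho * (lam / rho) ^ k * rho ^ (k + 1) := by
          rw [div_pow, pow_succ]
          field_simp
  have hsumm : ∀ i, Summable (fun k => f k i) := by
    intro i
    apply Summable.of_nonneg_of_le (fun k => hfnn k i) (fun k => hfle i k)
    apply Summable.mul_left
    exact summable_geometric_of_lt_one (div_nonneg hlam (le_of_lt hrho0))
      ((div_lt_one hrho0).mpr hrho)
  set x : ι → ℝ := fun i => ∑' k, f k i with hx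
  have hxnn : ∀ i, 0 ≤ x i := fun i => tsum_nonneg (fun k => hfnn k i)
  have hxc : ∀ i, c i / rho ≤ x i := by
    intro i
    have h0 : f 0 i = c i / rho := by simp [hf]
    calc c i / rho = f 0 i := h0.symm
      _ ≤ x i := Summable.le_tsum (hsumm i) 0 (fun k _ => hfnn k i)
  -- the eigen equation
  have hkey : ∀ i, rho * x i = N.mulVec x i + c i := by
    intro i
    have hNx : N.mulVec x i = ∑' k, (N ^ (k+1)).mulVec c i / rho ^ (k+1) := by
      rw [mulVec_apply]
      have h1 : ∀ j, x j = ∑' k, f k j := fun j => rfl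
      have h2 : ∑ j, N i j * x j = ∑ j, ∑' k, N i j * f k j := by
        exact Finset.sum_congr rfl fun j _ => by
          rw [h1 j, ← Summable.tsum_mul_left (N i j) (hsumm j)]
      rw [h2, ← Summable.tsum_finsetSum (fun j _ => Summable.mul_left _ (hsumm j))]
      congr 1
      funext k
      have h3 : ∑ j, N i j * f k j = (N.mulVec ((N ^ k).mulVec c)) i / rho ^ (k+1) := by
        rw [mulVec_apply, Finset.sum_div]
        exact Finset.sum_congr rfl fun j _ => by rw [hf]; simp only; ring
      rw [h3, Matrix.mulVec_mulVec, ← pow_succ']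
    have hsummshift : Summable (fun k => f (k+1) i) := by
      have h := (summable_nat_add_iff (f := fun k => f k i) 1).mpr (hsumm i)
      simpa using h
    have hlem : ∀ (A : ℝ) (k : ℕ), A / rho ^ (k+1) = rho * (A / rho ^ (k+1+1)) := by
      intro A k
      rw [pow_succ]
      field_simp
      ring
    have hshift : x i = f 0 i + ∑' k, f (k+1) i := Summable.tsum_eq_zero_add (hsumm i)
    have h4 : N.mulVec x i = rho * ∑' k, f (k+1) i := by
      rw [hNx, ← Summable.tsum_mul_left rho hsummshift]
      congr 1
      funext k
      rw [hf]
      exact hlem _ k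
    rw [h4]
    have h5 : f 0 i = c i / rho := by simp [hf]
    have : x i = c i / rho + ∑' k, f (k+1) i := by rw [hshift, h5]
    rw [this]
    field_simp
    ring
  -- positivity
  have hxpos : ∀ i, 0 < x i := by
    by_contra h
    push_neg at h
    obtain ⟨i2, hi2⟩ := h
    have hi2' : x i2 = 0 := le_antisymm hi2 (hxnn i2)
    set Z : Finset ι := univ.filter (fun i => x i = 0) with hZ
    have hZne : Z.Nonempty := ⟨i2, by simp [hZ, hi2']⟩
    obtain ⟨i1, hi1⟩ := hcne
    have hxi1 : 0 < x i1 := lt_of_lt_of_le (div_pos hi1 hrho0) (hxc i1)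
    have hZuniv : Z ≠ univ := by
      intro hcontra
      have : i1 ∈ Z := hcontra ▸ mem_univ i1
      simp [hZ] at this
      linarith
    obtain ⟨i, hiZ, j, hjZ, hij⟩ := hirr Z hZne hZuniv
    have hxi : x i = 0 := by
      simp only [hZ, mem_filter, mem_univ, true_and] at hiZ
      exact hiZ
    have hxj : 0 < x j := by
      have : ¬ (x j = 0) := by
        intro hcontra
        exact hjZ (by simp [hZ, hcontra])
      exact lt_of_le_of_ne (hxnn j) (Ne.symm this)
    have h6 : 0 < N.mulVec x i := by
      rw [mulVec_apply]
      have hterm : 0 < N i j * x j :=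
        mul_pos (lt_of_le_of_ne (hN i j) (Ne.symm hij)) hxj
      calc (0:ℝ) < N i j * x j := hterm
        _ ≤ ∑ l, N i l * x l := Finset.single_le_sum
            (fun l _ => mul_nonneg (hN i l) (hxnn l)) (mem_univ j)
    have h7 := hkey i
    rw [hxi] at h7
    have := hc i
    linarith
  exact ⟨x, hxpos, hkey⟩

end PFCore

namespace PFBridge
open PFCore

variable {n : ℕ}

/-- The principal submatrix of `M` on `I`, indexed by the subtype. -/
def subMat (M : Matrix (Fin n) (Fin n) ℝ) (I : Finset (Fin n)) : Matrix ↥I ↥I ℝ :=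
  fun i j => M i.1 j.1

lemma subMat_nonneg {M : Matrix (Fin n) (Fin n) ℝ} (hM : ∀ i j, 0 ≤ M i j)
    (I : Finset (Fin n)) : ∀ i j, 0 ≤ subMat M I i j := fun i j => hM i.1 j.1

lemma irr_transfer {M : Matrix (Fin n) (Fin n) ℝ} {I : Finset (Fin n)}
    (h : MatIrredOn (fun i j => M i j) I) : Irr (subMat M I) := by
  intro S hSne hSuniv
  set T : Finset (Fin n) := S.image Subtype.val with hT
  have hTsub : T ⊆ I := by
    intro j hj
    rw [hT] at hj
    obtain ⟨s, _, rfl⟩ := Finset.mem_image.mp hj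
    exact s.2
  have hTne : T.Nonempty := hSne.image _
  have hTne' : T ≠ I := by
    intro hc
    apply hSuniv
    apply Finset.eq_univ_iff_forall.mpr
    intro j
    have hj1 : j.1 ∈ T := by rw [hc]; exact j.2
    obtain ⟨s, hs, hsj⟩ := Finset.mem_image.mp hj1
    have : s = j := Subtype.ext hsj
    exact this ▸ hs
  obtain ⟨i, hiT, j, hjT, hij⟩ := h T hTsub hTne hTne'
  obtain ⟨s, hs, rfl⟩ := Finset.mem_image.mp hiT
  have hjI : j ∈ I := (Finset.mem_sdiff.mp hjT).1
  have hjnT : j ∉ T := (Finset.mem_sdiff.mp hjT).2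
  refine ⟨s, hs, ⟨j, hjI⟩, ?_, hij⟩
  intro hc
  exact hjnT (Finset.mem_image.mpr ⟨⟨j, hjI⟩, hc, rfl⟩)

/-- If there is a positive eigenvector on `I` then `matSpecRadOn M I` equals its
eigenvalue. -/
lemma specRadOn_eq {M : Matrix (Fin n) (Fin n) ℝ} (hM : ∀ i j, 0 ≤ M i j)
    {I : Finset (Fin n)} (hIne : I.Nonempty) {mu : ℝ} {y : ↥I → ℝ}
    (hy : ∀ i, 0 < y i) (heig : (subMat M I).mulVec y = mu • y) :
    matSpecRadOn M I = mu := by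
  haveI : Nonempty ↥I := ⟨⟨hIne.choose, hIne.choose_spec⟩⟩
  have hmu0 : 0 ≤ mu := eig_nonneg (subMat_nonneg hM I) hy heig
  have hgreat : IsGreatest {r | ∃ mu' : ℂ, ∃ v : Fin n → ℂ, (∃ i ∈ I, v i ≠ 0) ∧
      (∀ i ∈ I, (∑ j ∈ I, (M i j : ℂ) * v j) = mu' * v i) ∧ r = ‖mu'‖} mu := by
    constructor
    · -- membership
      refine ⟨(mu : ℂ), fun i => if h : i ∈ I then ((y ⟨i, h⟩ : ℝ) : ℂ) else 0, ?_, ?_, ?_⟩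
      · obtain ⟨i, hi⟩ := hIne
        refine ⟨i, hi, ?_⟩
        simp only [dif_pos hi]
        exact_mod_cast ne_of_gt (hy ⟨i, hi⟩)
      · intro i hi
        have hstep : ∑ j ∈ I, (M i j : ℂ) * (if h : j ∈ I then ((y ⟨j, h⟩ : ℝ) : ℂ) else 0)
            = ((∑ j : ↥I, M i j.1 * y j : ℝ) : ℂ) := by
          rw [← Finset.sum_attach I (fun j => (M i j : ℂ) *
            (if h : j ∈ I then ((y ⟨j, h⟩ : ℝ) : ℂ) else 0))]
          push_cast
          exact Finset.sum_congr rfl fun j _ => by rw [dif_pos j.2]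
        rw [hstep]
        have h2 : (∑ j : ↥I, M i j.1 * y j : ℝ) = mu * y ⟨i, hi⟩ := by
          have := congrFun heig ⟨i, hi⟩
          rw [PFCore.mulVec_apply] at this
          simpa [subMat] using this
        rw [h2]
        simp only [dif_pos hi]
        push_cast
        ring
      · rw [Complex.norm_real, Real.norm_eq_abs, abs_of_nonneg hmu0]
    · -- upper bound
      rintro e ⟨lam, v, ⟨i1, hi1, hvi1⟩, hveq, rfl⟩
      set v' : ↥I → ℂ := fun j => v j.1 with hv'
      have hv'ne : v' ≠ 0 := by
        intro hc
        apply hvi1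
        have := congrFun hc ⟨i1, hi1⟩
        simpa [hv'] using this
      have hv'eq : ∀ i : ↥I, (∑ j : ↥I, ((subMat M I i j : ℝ) : ℂ) * v' j) = lam * v' i := by
        intro i
        have h1 := hveq i.1 i.2
        rw [← Finset.sum_attach I (fun j => (M i.1 j : ℂ) * v j)] at h1
        exact h1
      exact dominate (subMat_nonneg hM I) hy heig hv'ne hv'eq
  simp only [matSpecRadOn]
  exact hgreat.csSup_eq

end PFBridge
end

/-- a block upper triangular nonnegative matrix has a positive eigenvector iff it
is strongly nonnegative. -/
theorem matrix_positive_perron_iff {n : ℕ} (hn : 1 ≤ n)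
    (M : Matrix (Fin n) (Fin n) ℝ)
    (hM : ∀ i j, 0 ≤ M i j)
    (r s : ℕ) (hs : s ≤ r) (I : Fin r → Finset (Fin n))
    (hdisj : ∀ a b, a ≠ b → Disjoint (I a) (I b))
    (hcover : ∀ i : Fin n, ∃ a, i ∈ I a)
    (hblockne : ∀ a, (I a).Nonempty)
    (hirr : ∀ a, MatIrredOn (fun i j => M i j) (I a))
    (htri : ∀ a b : Fin r, b < a → ∀ p ∈ I a, ∀ q ∈ I b, M p q = 0)
    (hlink : ∀ a : Fin r, a.val < s →
      ∃ b : Fin r, a < b ∧ ∃ p ∈ I a, ∃ q ∈ I b, M p q ≠ 0)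
    (hgenuine : ∀ a : Fin r, s ≤ a.val → ∀ p ∈ I a, ∀ q, q ∉ I a → M p q = 0) :
    (∃ x : Fin n → ℝ, (∀ i, 0 < x i) ∧ ∃ mu : ℝ, M.mulVec x = mu • x) ↔
      ((∀ a : Fin r, a.val < s → matSpecRadOn M (I a) < matSpecRadOn M Finset.univ) ∧
       (∀ a : Fin r, s ≤ a.val → matSpecRadOn M (I a) = matSpecRadOn M Finset.univ)) := by
  classical
  haveI : NeZero n := ⟨by omega⟩
  haveI hFinN : Nonempty (Fin n) := ⟨⟨0, by omega⟩⟩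
  -- the block assignment function
  have hblkex : ∀ i : Fin n, ∃ a, i ∈ I a := hcover
  set blk : Fin n → Fin r := fun i => (hblkex i).choose with hblkdef
  have hblk : ∀ i, i ∈ I (blk i) := fun i => (hblkex i).choose_spec
  have hmem_iff : ∀ (i : Fin n) (a : Fin r), i ∈ I a ↔ blk i = a := by
    intro i a
    constructor
    · intro hi
      by_contra hne
      exact (Finset.disjoint_left.mp (hdisj _ _ hne)) (hblk i) hi
    · intro h; exact h ▸ hblk i
  have hIne : ∀ a : Fin r, Nonempty ↥(I a) := fun a =>
    ⟨⟨(hblockne a).choose, (hblockne a).choose_spec⟩⟩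
  -- Perron data for each block
  have hperron : ∀ a : Fin r, ∃ lam : ℝ, 0 ≤ lam ∧ ∃ y : ↥(I a) → ℝ,
      (∀ i, 0 < y i) ∧ (PFBridge.subMat M (I a)).mulVec y = lam • y := by
    intro a
    haveI := hIne a
    obtain ⟨lam, h0, y, hy, he⟩ := PFCore.perron (PFBridge.subMat_nonneg hM (I a))
      (PFBridge.irr_transfer (hirr a))
    exact ⟨lam, h0, y, hy, he⟩
  choose lam hlam0 yv hyvpos hyveig using hperron
  have hspecA : ∀ a, matSpecRadOn M (I a) = lam a := fun a =>
    PFBridge.specRadOn_eq hM (hblockne a) (hyvpos a) (hyveig a)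
  -- helper: sums with dite vectors
  have hsum_dite : ∀ (a : Fin r) (p : Fin n) (g : ↥(I a) → ℝ),
      (∑ j, M p j * (if h : j ∈ I a then g ⟨j, h⟩ else 0)) =
        ∑ j : ↥(I a), M p j.1 * g j := by
    intro a p g
    rw [← Finset.sum_subset (Finset.subset_univ (I a))
      (fun q _ hq => by rw [dif_neg hq, mul_zero])]
    rw [← Finset.sum_coe_sort (I a)
      (fun j => M p j * (if h : j ∈ I a then g ⟨j, h⟩ else 0))]
    exact Finset.sum_congr rfl fun j _ => by rw [dif_pos j.2]
  have hsum_restrict : ∀ (a : Fin r) (p : Fin n) (g : Fin n → ℝ),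
      (∑ j ∈ I a, M p j * g j) = ∑ j : ↥(I a), M p j.1 * g j.1 :=
    fun a p g => (Finset.sum_coe_sort (I a) (fun j => M p j * g j)).symm
  constructor
  · -- forward direction
    rintro ⟨x, hxpos, mu, hxeig⟩
    have hxeig' : ∀ p, ∑ j, M p j * x j = mu * x p := by
      intro p
      have := congrFun hxeig p
      rw [PFCore.mulVec_apply] at this
      simpa using this
    -- full spectral radius equals mu
    have hrho : matSpecRadOn M Finset.univ = mu := by
      have huniv_ne : (Finset.univ : Finset (Fin n)).Nonempty := Finset.univ_nonempty
      refine PFBridge.specRadOn_eq hM huniv_ne (y := fun i => x i.1)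
        (fun i => hxpos i.1) ?_
      funext i
      show (∑ j : ↥(Finset.univ : Finset (Fin n)), M i.1 j.1 * x j.1) = mu * x i.1
      rw [Finset.sum_coe_sort (Finset.univ : Finset (Fin n)) (fun j => M i.1 j * x j)]
      exact hxeig' i.1
    rw [hrho]
    constructor
    · -- blocks below s : strict
      intro a ha
      rw [hspecA a]
      obtain ⟨b, hab, p0, hp0, q0, hq0, hMp0q0⟩ := hlink a ha
      haveI := hIne a
      -- subinvariance of the restriction of x
      have hsub : ∀ i : ↥(I a), (PFBridge.subMat M (I a)).mulVec (fun j => x j.1) i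
          ≤ mu * x i.1 := by
        intro i
        show (∑ j : ↥(I a), M i.1 j.1 * x j.1) ≤ mu * x i.1
        rw [← hsum_restrict a i.1 x, ← hxeig' i.1]
        apply Finset.sum_le_sum_of_subset_of_nonneg (Finset.subset_univ (I a))
        intro j _ _
        exact mul_nonneg (hM i.1 j) (le_of_lt (hxpos j))
      have hq0a : q0 ∉ I a := by
        intro hc
        have h1 : blk q0 = a := (hmem_iff q0 a).mp hc
        have h2 : blk q0 = b := (hmem_iff q0 b).mp hq0
        rw [h1] at h2
        exact absurd h2 (ne_of_lt hab)
      have hstrict : (PFBridge.subMat M (I a)).mulVec (fun j => x j.1) ⟨p0, hp0⟩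
          < mu * x p0 := by
        show (∑ j : ↥(I a), M p0 j.1 * x j.1) < mu * x p0
        rw [← hsum_restrict a p0 x, ← hxeig' p0]
        apply Finset.sum_lt_sum_of_subset (Finset.subset_univ (I a))
          (Finset.mem_univ q0) hq0a
        · exact mul_pos (lt_of_le_of_ne (hM p0 q0) (Ne.symm hMp0q0)) (hxpos q0)
        · intro j _ _
          exact mul_nonneg (hM p0 j) (le_of_lt (hxpos j))
      exact PFCore.strict_sub (PFBridge.subMat_nonneg hM (I a))
        (PFBridge.irr_transfer (hirr a)) (hyvpos a) (hyveig a)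
        (fun i : ↥(I a) => hxpos i.1) hsub ⟨p0, hp0⟩ hstrict
    · -- blocks at or above s : equality
      intro a ha
      haveI := hIne a
      refine (PFBridge.specRadOn_eq hM (hblockne a) (y := fun j : ↥(I a) => x j.1)
        (fun j => hxpos j.1) ?_)
      funext i
      show (∑ j : ↥(I a), M i.1 j.1 * x j.1) = mu * x i.1
      rw [← hsum_restrict a i.1 x]
      have h2 : ∑ j ∈ I a, M i.1 j * x j = ∑ j, M i.1 j * x j := by
        apply Finset.sum_subset (Finset.subset_univ (I a))
        intro q _ hq
        rw [hgenuine a ha i.1 i.2 q hq, zero_mul]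
      rw [h2]
      exact hxeig' i.1
  · -- reverse direction
    rintro ⟨hless, heqs⟩
    set rho : ℝ := matSpecRadOn M Finset.univ with hrhodef
    have hlamlt : ∀ a : Fin r, a.val < s → lam a < rho := by
      intro a ha
      have := hless a ha
      rwa [hspecA a] at this
    have hlameq : ∀ a : Fin r, s ≤ a.val → lam a = rho := by
      intro a ha
      have := heqs a ha
      rwa [hspecA a] at this
    -- downward induction
    have hQ : ∀ k, k ≤ r → ∃ x : Fin n → ℝ,
        (∀ i : Fin n, r - k ≤ (blk i).val → 0 < x i) ∧
        (∀ i : Fin n, (blk i).val < r - k → x i = 0) ∧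
        (∀ p : Fin n, r - k ≤ (blk p).val → ∑ j, M p j * x j = rho * x p) := by
      intro k
      induction k with
      | zero =>
        intro _
        refine ⟨fun _ => 0, ?_, fun _ _ => rfl, ?_⟩
        · intro i h
          exact absurd h (by have := (blk i).isLt; omega)
        · intro p h
          exact absurd h (by have := (blk p).isLt; omega)
      | succ k ih =>
        intro hk1
        obtain ⟨x, hxpos, hxzero, hxeig⟩ := ih (by omega)
        set a : Fin r := ⟨r - k - 1, by omega⟩ with hadef
        have haval : a.val = r - k - 1 := rfl
        have hxnn : ∀ i, 0 ≤ x i := by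
          intro i
          rcases le_or_gt (r - k) (blk i).val with h | h
          · exact le_of_lt (hxpos i h)
          · rw [hxzero i h]
        have hblk_split : ∀ i : Fin n, r - (k+1) ≤ (blk i).val →
            blk i = a ∨ r - k ≤ (blk i).val := by
          intro i h
          rcases Nat.lt_or_ge (blk i).val (r - k) with h2 | h2
          · left
            apply Fin.ext
            rw [haval]; omega
          · right; exact h2
        have hIa_zero : ∀ j, j ∈ I a → x j = 0 := by
          intro j hj
          apply hxzero
          rw [(hmem_iff j a).mp hj, haval]
          omega
        have htri_row : ∀ p : Fin n, r - k ≤ (blk p).val → ∀ q ∈ I a, M p q = 0 := by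
          intro p hp q hq
          refine htri (blk p) a ?_ p (hblk p) q hq
          show a.val < (blk p).val
          rw [haval]; omega
        rcases Nat.lt_or_ge a.val s with hcase | hcase
        · -- linked block: Neumann series
          haveI := hIne a
          set c : ↥(I a) → ℝ := fun p => ∑ j, M p.1 j * x j with hcdef
          have hcnn : ∀ p, 0 ≤ c p := fun p =>
            Finset.sum_nonneg fun j _ => mul_nonneg (hM p.1 j) (hxnn j)
          obtain ⟨b, hab, p0, hp0, q0, hq0, hMp0q0⟩ := hlink a hcase
          have hxq0 : 0 < x q0 := by
            apply hxpos
            have h1 : blk q0 = b := (hmem_iff q0 b).mp hq0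
            rw [h1]
            have : a.val < b.val := hab
            rw [haval] at this
            omega
          have hcne : ∃ p : ↥(I a), 0 < c p := by
            refine ⟨⟨p0, hp0⟩, ?_⟩
            rw [hcdef]
            calc (0:ℝ) < M p0 q0 * x q0 :=
                  mul_pos (lt_of_le_of_ne (hM p0 q0) (Ne.symm hMp0q0)) hxq0
              _ ≤ ∑ j, M p0 j * x j := Finset.single_le_sum
                  (fun j _ => mul_nonneg (hM p0 j) (hxnn j)) (Finset.mem_univ q0)
          obtain ⟨w, hwpos, hweig⟩ := PFCore.neumann (PFBridge.subMat_nonneg hM (I a))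
            (PFBridge.irr_transfer (hirr a)) (hlam0 a) (hyvpos a) (hyveig a)
            (hlamlt a hcase) hcnn hcne
          set x' : Fin n → ℝ := fun i => x i + (if h : i ∈ I a then w ⟨i, h⟩ else 0)
            with hx'def
          refine ⟨x', ?_, ?_, ?_⟩
          · intro i h
            rcases hblk_split i h with h1 | h1
            · have hiIa : i ∈ I a := (hmem_iff i a).mpr h1
              have : x i = 0 := hIa_zero i hiIa
              simp only [hx'def, this, dif_pos hiIa, zero_add]
              exact hwpos _
            · have hiIa : i ∉ I a := by
                intro hc
                have := (hmem_iff i a).mp hc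
                rw [this, haval] at h1
                omega
              simp only [hx'def, dif_neg hiIa, add_zero]
              exact hxpos i h1
          · intro i h
            have hiIa : i ∉ I a := by
              intro hc
              have := (hmem_iff i a).mp hc
              rw [this, haval] at h
              omega
            simp only [hx'def, dif_neg hiIa, add_zero]
            apply hxzero
            omega
          · intro p hp
            have hsplit : ∀ q, x' q = x q + (if h : q ∈ I a then w ⟨q, h⟩ else 0) := fun q => rfl
            have hsum : ∑ j, M p j * x' j = (∑ j, M p j * x j)
                + ∑ j : ↥(I a), M p j.1 * w j := by
              rw [← hsum_dite a p w, ← Finset.sum_add_distrib]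
              exact Finset.sum_congr rfl fun j _ => by rw [hsplit j]; ring
            rcases hblk_split p hp with h1 | h1
            · -- p in block a
              have hpIa : p ∈ I a := (hmem_iff p a).mpr h1
              have hxp : x p = 0 := hIa_zero p hpIa
              have hkey := hweig ⟨p, hpIa⟩
              rw [PFCore.mulVec_apply] at hkey
              have hc2 : c ⟨p, hpIa⟩ = ∑ j, M p j * x j := rfl
              have hsm : ∀ j : ↥(I a), PFBridge.subMat M (I a) ⟨p, hpIa⟩ j = M p j.1 :=
                fun j => rfl
              rw [hsum]
              have : x' p = w ⟨p, hpIa⟩ := by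
                simp only [hx'def, hxp, dif_pos hpIa, zero_add]
              rw [this]
              rw [← hc2]
              have h3 : ∑ j : ↥(I a), M p j.1 * w j
                  = ∑ j : ↥(I a), PFBridge.subMat M (I a) ⟨p, hpIa⟩ j * w j :=
                Finset.sum_congr rfl fun j _ => by rw [hsm j]
              rw [h3]
              linarith [hkey]
            · -- p in a later block
              have hzero2 : ∑ j : ↥(I a), M p j.1 * w j = 0 := by
                apply Finset.sum_eq_zero
                intro j _
                rw [htri_row p h1 j.1 j.2, zero_mul]
              have hpIa : p ∉ I a := by
                intro hc
                have := (hmem_iff p a).mp hc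
                rw [this, haval] at h1
                omega
              have hx'p : x' p = x p := by
                simp only [hx'def, dif_neg hpIa, add_zero]
              rw [hsum, hzero2, add_zero, hxeig p h1, hx'p]
        · -- genuine block : Perron vector
          haveI := hIne a
          have hlama : lam a = rho := hlameq a hcase
          set x' : Fin n → ℝ := fun i => x i + (if h : i ∈ I a then yv a ⟨i, h⟩ else 0)
            with hx'def
          refine ⟨x', ?_, ?_, ?_⟩
          · intro i h
            rcases hblk_split i h with h1 | h1
            · have hiIa : i ∈ I a := (hmem_iff i a).mpr h1
              have : x i = 0 := hIa_zero i hiIa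
              simp only [hx'def, this, dif_pos hiIa, zero_add]
              exact hyvpos a _
            · have hiIa : i ∉ I a := by
                intro hc
                have := (hmem_iff i a).mp hc
                rw [this, haval] at h1
                omega
              simp only [hx'def, dif_neg hiIa, add_zero]
              exact hxpos i h1
          · intro i h
            have hiIa : i ∉ I a := by
              intro hc
              have := (hmem_iff i a).mp hc
              rw [this, haval] at h
              omega
            simp only [hx'def, dif_neg hiIa, add_zero]
            apply hxzero
            omega
          · intro p hp
            have hsum : ∑ j, M p j * x' j = (∑ j, M p j * x j)
                + ∑ j : ↥(I a), M p j.1 * yv a j := by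
              rw [← hsum_dite a p (yv a), ← Finset.sum_add_distrib]
              exact Finset.sum_congr rfl fun j _ => by
                show M p j * x' j = _
                simp only [hx'def]
                ring
            rcases hblk_split p hp with h1 | h1
            · -- p in block a
              have hpIa : p ∈ I a := (hmem_iff p a).mpr h1
              have hxp : x p = 0 := hIa_zero p hpIa
              -- genuine rows vanish outside I a, and x vanishes on I a
              have hxa : ∑ j, M p j * x j = 0 := by
                apply Finset.sum_eq_zero
                intro j _
                by_cases hj : j ∈ I a
                · rw [hIa_zero j hj, mul_zero]
                · rw [hgenuine a hcase p hpIa j hj, zero_mul]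
              have hkey := congrFun (hyveig a) ⟨p, hpIa⟩
              rw [PFCore.mulVec_apply] at hkey
              simp only [Pi.smul_apply, smul_eq_mul] at hkey
              have hx'p : x' p = yv a ⟨p, hpIa⟩ := by
                simp only [hx'def, hxp, dif_pos hpIa, zero_add]
              rw [hsum, hxa, zero_add, hx'p]
              have h3 : ∑ j : ↥(I a), M p j.1 * yv a j
                  = ∑ j : ↥(I a), PFBridge.subMat M (I a) ⟨p, hpIa⟩ j * yv a j := rfl
              rw [h3, hkey, hlama]
            · -- p in a later block
              have hzero2 : ∑ j : ↥(I a), M p j.1 * yv a j = 0 := by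
                apply Finset.sum_eq_zero
                intro j _
                rw [htri_row p h1 j.1 j.2, zero_mul]
              have hpIa : p ∉ I a := by
                intro hc
                have := (hmem_iff p a).mp hc
                rw [this, haval] at h1
                omega
              have hx'p : x' p = x p := by
                simp only [hx'def, dif_neg hpIa, add_zero]
              rw [hsum, hzero2, add_zero, hxeig p h1, hx'p]
    obtain ⟨x, hxpos, _, hxeig⟩ := hQ r (le_refl r)
    refine ⟨x, fun i => hxpos i (by omega), rho, ?_⟩
    funext p
    rw [PFCore.mulVec_apply]
    rw [hxeig p (by omega)]
    simp [Pi.smul_apply, smul_eq_mul]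

end
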